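/- Let S₁ = {1, ω, ω²} where ω = e^{i2π/3}, and S₂ = {−1, 1+ω, 1+ω²}. Then the sum map φ : S₁ × S₂ → ℂ, φ(a,b) = a + b, is not injective, even though |S₁ ∩ S₂| ≤ 1. -/
import Mathlib


open Real

/-- For `S₁ = {1, ω, ω²}` with `ω = e^{i2π/3}` and `S₂ = {−1, 1+ω, 1+ω²}`,
the sum map `φ(a,b) = a + b` on `S₁ × S₂` is not injective, even though
`S₁ ∩ S₂` has at most one element. -/
theorem stmt_11 (ω : ℂ) (hω : ω = Complex.exp (Complex.I * (2 * π / 3 : ℝ))) :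
    ¬ Set.InjOn (fun p : ℂ × ℂ => p.1 + p.2)
        (({1, ω, ω ^ 2} : Set ℂ) ×ˢ ({-1, 1 + ω, 1 + ω ^ 2} : Set ℂ)) ∧
    Set.Subsingleton (({1, ω, ω ^ 2} : Set ℂ) ∩ ({-1, 1 + ω, 1 + ω ^ 2} : Set ℂ)) := by
  have him : ω.im = Real.sin (2 * π / 3) := by
    rw [hω, mul_comm, Complex.exp_ofReal_mul_I_im]
  have hsinpos : 0 < Real.sin (2 * π / 3) :=
    Real.sin_pos_of_pos_of_lt_pi (by positivity) (by linarith [Real.pi_pos])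
  have hω1 : ω ≠ 1 := by
    intro h
    rw [h] at him
    simp at him
    linarith
  have hω3 : ω ^ 3 = 1 := by
    rw [hω, ← Complex.exp_nat_mul]
    rw [show ((3 : ℕ) : ℂ) * (Complex.I * ((2 * π / 3 : ℝ) : ℂ)) = 2 * π * Complex.I by
      push_cast; ring]
    exact Complex.exp_two_pi_mul_I
  have hsum : ω ^ 2 + ω + 1 = 0 := by
    have h := sub_ne_zero.mpr hω1
    have hmul : (ω - 1) * (ω ^ 2 + ω + 1) = 0 := by linear_combination hω3
    exact (mul_eq_zero.mp hmul).resolve_left h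
  have hω0 : ω ≠ 0 := by
    intro h; rw [h] at hω3; norm_num at hω3
  have hωn1 : ω ≠ -1 := by
    intro h; rw [h] at hω3; norm_num at hω3
  have hω2n1 : ω ^ 2 ≠ -1 := by
    intro h
    exact hωn1 (by linear_combination ω * h - hω3)
  constructor
  · intro hinj
    have h1 : ((1 : ℂ), (-1 : ℂ)) ∈
        (({1, ω, ω ^ 2} : Set ℂ) ×ˢ ({-1, 1 + ω, 1 + ω ^ 2} : Set ℂ)) := by simp
    have h2 : (ω, 1 + ω ^ 2) ∈
        (({1, ω, ω ^ 2} : Set ℂ) ×ˢ ({-1, 1 + ω, 1 + ω ^ 2} : Set ℂ)) := by simp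
    have heq : (fun p : ℂ × ℂ => p.1 + p.2) ((1 : ℂ), (-1 : ℂ)) =
        (fun p : ℂ × ℂ => p.1 + p.2) (ω, 1 + ω ^ 2) := by
      simp only
      linear_combination -hsum
    have := hinj h1 h2 heq
    exact hω1 (congrArg Prod.fst this).symm
  · intro x hx y hy
    exfalso
    obtain ⟨hx1, hx2⟩ := hx
    simp only [Set.mem_insert_iff, Set.mem_singleton_iff] at hx1 hx2
    rcases hx1 with h1 | h1 | h1 <;> rcases hx2 with h2 | h2 | h2 <;> subst h1
    · norm_num at h2
    · exact hω0 (by linear_combination -h2)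
    · have h3 : ω ^ 2 = 0 := by linear_combination -h2
      exact one_ne_zero (by linear_combination ω * h3 - hω3 : (1:ℂ) = 0)
    · exact hωn1 h2
    · exact one_ne_zero (by linear_combination -h2 : (1:ℂ) = 0)
    · exact hω0 (by linear_combination h2 / 2 + hsum / 2)
    · exact hω2n1 h2
    · have h3 : ω ^ 2 = 0 := by linear_combination h2 / 2 + hsum / 2
      exact one_ne_zero (by linear_combination ω * h3 - hω3 : (1:ℂ) = 0)
    · exact one_ne_zero (by linear_combination -h2 : (1:ℂ) = 0)
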